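/- Let (Ω, 𝔽, P) be a probability space, let g : Ω → ℝ^d be a random vector such that each component g(i) and g(i)² is integrable, and let w, w* ∈ ℝ^d be fixed. Assume E[g(i)²] > 0 for every i. Then the expected squared distance E‖(w − D·g) − w*‖², viewed as a function of a deterministic diagonal matrix D, is minimized exactly when the i-th diagonal entry equals α(i) = E[g(i)·(w(i) − w*(i))] / E[g(i)²] for every i = 1, …, d. -/

import Mathlib

open Matrix MeasureTheory

/-- The Euclidean norm of a vector in `ℝ^d`. -/
noncomputable def enormEuclid {d : ℕ} (v : Fin d → ℝ) : ℝ :=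
  ‖(EuclideanSpace.equiv (Fin d) ℝ).symm v‖

lemma enorm_sq {d : ℕ} (v : Fin d → ℝ) : enormEuclid v ^ 2 = ∑ i, v i ^ 2 := by
  rw [enormEuclid, EuclideanSpace.norm_eq, Real.sq_sqrt (by positivity)]
  simp [sq_abs]

lemma quad_integrable {Ω : Type*} [MeasurableSpace Ω] (P : Measure Ω) [IsProbabilityMeasure P]
    (f : Ω → ℝ) (hf : Integrable f P) (hf2 : Integrable (fun ω => f ω ^ 2) P) (c t : ℝ) :
    Integrable (fun ω => (c - t * f ω) ^ 2) P := by
  have h : (fun ω => (c - t * f ω) ^ 2)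
      = fun ω => (c ^ 2 - (2 * t * c) * f ω) + t ^ 2 * f ω ^ 2 := by
    funext ω; ring
  rw [h]
  exact ((integrable_const _).sub (hf.const_mul _)).add (hf2.const_mul _)

lemma quad_int {Ω : Type*} [MeasurableSpace Ω] (P : Measure Ω) [IsProbabilityMeasure P]
    (f : Ω → ℝ) (hf : Integrable f P) (hf2 : Integrable (fun ω => f ω ^ 2) P) (c t : ℝ) :
    ∫ ω, (c - t * f ω) ^ 2 ∂P
      = c ^ 2 - (2 * t * c) * (∫ ω, f ω ∂P) + t ^ 2 * ∫ ω, f ω ^ 2 ∂P := by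
  have h : (fun ω => (c - t * f ω) ^ 2)
      = fun ω => ((fun ω => c ^ 2 - (2 * t * c) * f ω) ω + (fun ω => t ^ 2 * f ω ^ 2) ω) := by
    funext ω; ring
  have hA : Integrable (fun ω => c ^ 2 - (2 * t * c) * f ω) P :=
    (integrable_const _).sub (hf.const_mul _)
  have hB : Integrable (fun ω => t ^ 2 * f ω ^ 2) P := hf2.const_mul _
  rw [h, integral_add hA hB]
  have h2 : (fun ω => c ^ 2 - (2 * t * c) * f ω)
      = fun ω => ((fun _ => c ^ 2) ω - (fun ω => (2 * t * c) * f ω) ω) := rfl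
  rw [h2, integral_sub (integrable_const _) (hf.const_mul _), MeasureTheory.integral_const_mul,
    MeasureTheory.integral_const_mul, integral_const]
  simp

/-- The ideal diagonal step-size: for a random gradient vector `g` with integrable components
and squares and `E[g(i)²] > 0`, the expected squared distance `E‖(w - D·g) - w*‖²` over
deterministic diagonal matrices `D` is minimized exactly when the `i`-th diagonal entry equals
`α(i) = E[g(i)·(w(i) - w*(i))] / E[g(i)²]` for every `i`. -/
theorem stmt_5 {d : ℕ} {Ω : Type*} [MeasurableSpace Ω] (P : Measure Ω)
    [IsProbabilityMeasure P] (g : Ω → Fin d → ℝ)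
    (hint1 : ∀ i, Integrable (fun ω => g ω i) P)
    (hint2 : ∀ i, Integrable (fun ω => (g ω i) ^ 2) P)
    (w wstar : Fin d → ℝ)
    (hpos : ∀ i, 0 < ∫ ω, (g ω i) ^ 2 ∂P)
    (α : Fin d → ℝ)
    (hα : ∀ i, α i = (∫ ω, g ω i * (w i - wstar i) ∂P) / ∫ ω, (g ω i) ^ 2 ∂P) :
    ∀ β : Fin d → ℝ,
      (∫ ω, enormEuclid ((w - (Matrix.diagonal α).mulVec (g ω)) - wstar) ^ 2 ∂P)
          ≤ (∫ ω, enormEuclid ((w - (Matrix.diagonal β).mulVec (g ω)) - wstar) ^ 2 ∂P)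
        ∧ ((∫ ω, enormEuclid ((w - (Matrix.diagonal β).mulVec (g ω)) - wstar) ^ 2 ∂P)
              = (∫ ω, enormEuclid ((w - (Matrix.diagonal α).mulVec (g ω)) - wstar) ^ 2 ∂P)
            ↔ β = α) := by
  set c : Fin d → ℝ := fun i => w i - wstar i with hc
  set E : Fin d → ℝ := fun i => ∫ ω, g ω i ∂P with hE
  set S : Fin d → ℝ := fun i => ∫ ω, (g ω i) ^ 2 ∂P with hS
  -- general formula for the objective
  have hF : ∀ t : Fin d → ℝ,
      (∫ ω, enormEuclid ((w - (Matrix.diagonal t).mulVec (g ω)) - wstar) ^ 2 ∂P)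
        = ∑ i, (c i ^ 2 - (2 * t i * c i) * E i + t i ^ 2 * S i) := by
    intro t
    have h1 : (fun ω => enormEuclid ((w - (Matrix.diagonal t).mulVec (g ω)) - wstar) ^ 2)
        = fun ω => ∑ i, (c i - t i * g ω i) ^ 2 := by
      funext ω
      rw [enorm_sq]
      refine Finset.sum_congr rfl fun i _ => ?_
      simp [Matrix.mulVec_diagonal, Pi.sub_apply, hc]
      ring
    rw [h1, integral_finset_sum _ fun i _ => quad_integrable P _ (hint1 i) (hint2 i) (c i) (t i)]
    exact Finset.sum_congr rfl fun i _ => quad_int P _ (hint1 i) (hint2 i) (c i) (t i)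
  have hαS : ∀ i, α i * S i = E i * c i := by
    intro i
    have h2 : (∫ ω, g ω i * (w i - wstar i) ∂P) = E i * c i := by
      rw [hE, hc]
      exact MeasureTheory.integral_mul_const _ _
    rw [hα i, h2, div_mul_cancel₀]
    exact (hpos i).ne'
  intro β
  have hdiff : (∫ ω, enormEuclid ((w - (Matrix.diagonal β).mulVec (g ω)) - wstar) ^ 2 ∂P)
      - (∫ ω, enormEuclid ((w - (Matrix.diagonal α).mulVec (g ω)) - wstar) ^ 2 ∂P)
      = ∑ i, S i * (β i - α i) ^ 2 := by
    rw [hF, hF, ← Finset.sum_sub_distrib]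
    refine Finset.sum_congr rfl fun i _ => ?_
    linear_combination (2 * (β i - α i)) * hαS i
  constructor
  · nlinarith [hdiff, Finset.sum_nonneg (fun i (_ : i ∈ Finset.univ) =>
      mul_nonneg (hpos i).le (sq_nonneg (β i - α i)))]
  · constructor
    · intro h
      have hsum : ∑ i, S i * (β i - α i) ^ 2 = 0 := by linarith [hdiff]
      funext i
      have := (Finset.sum_eq_zero_iff_of_nonneg (fun i _ =>
        mul_nonneg (hpos i).le (sq_nonneg (β i - α i)))).mp hsum i (Finset.mem_univ i)
      have hSne : S i ≠ 0 := (hpos i).ne'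
      have : (β i - α i) ^ 2 = 0 := by
        rcases mul_eq_zero.mp this with h' | h'
        · exact absurd h' hSne
        · exact h'
      have := pow_eq_zero_iff (n := 2) (by norm_num) |>.mp this
      linarith
    · intro h
      rw [h]
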